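/- Let j ∈ ℕ, j ≥ 1, and suppose N and M = N/10 are integers with 2^{j+3} < N and 2^{j−1} ≤ M < 2^j. Define ℓ(β) = ⌈log₂(β+1)⌉. Then the average of ℓ(β) over integers β ∈ [M, N) is strictly greater than j + 15/7. -/

import Mathlib

lemma clog_eq_of_mem (k β : ℕ) (h1 : 2 ^ k ≤ β) (h2 : β < 2 ^ (k + 1)) :
    Nat.clog 2 (β + 1) = k + 1 := by
  apply le_antisymm
  · exact (Nat.clog_le_iff_le_pow (by norm_num)).mpr (by omega)
  · exact (Nat.lt_clog_iff_pow_lt (by norm_num)).mpr (by omega)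

lemma sum_clog_const (a b k : ℕ) (h1 : 2 ^ k ≤ a) (h2 : b ≤ 2 ^ (k + 1)) :
    ∑ β ∈ Finset.Ico a b, Nat.clog 2 (β + 1) = (b - a) * (k + 1) := by
  have hc : ∀ β ∈ Finset.Ico a b, Nat.clog 2 (β + 1) = k + 1 := by
    intro β hβ
    rw [Finset.mem_Ico] at hβ
    exact clog_eq_of_mem k β (le_trans h1 hβ.1) (lt_of_lt_of_le hβ.2 h2)
  rw [Finset.sum_congr rfl hc, Finset.sum_const, smul_eq_mul, Nat.card_Ico]

/-- average bit-length over `[M, N)` exceeds `j + 15/7`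
in the case `2^{j+3} < N`. -/
theorem average_length_case2 (j M N : ℕ) (hj : 1 ≤ j) (hN : N = 10 * M)
    (h₁ : 2 ^ (j + 3) < N)
    (h₂ : 2 ^ (j - 1) ≤ M) (h₃ : M < 2 ^ j) :
    (j : ℝ) + 15 / 7 <
      (∑ β ∈ Finset.Ico M N, (⌈Real.logb 2 ((β : ℝ) + 1)⌉ : ℝ)) / ((N : ℝ) - M) := by
  have hcast : ∀ β : ℕ, (⌈Real.logb 2 ((β : ℝ) + 1)⌉ : ℝ) = (Nat.clog 2 (β + 1) : ℝ) := by
    intro β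
    have h : ((β : ℝ) + 1) = ((β + 1 : ℕ) : ℝ) := by push_cast; ring
    rw [h, show ((2:ℝ)) = ((2:ℕ):ℝ) by norm_num,
      Real.ceil_logb_natCast (by positivity), Int.clog_natCast]
    push_cast
    ring
  simp_rw [hcast]
  rw [← Nat.cast_sum]
  have hjm : j - 1 + 1 = j := by omega
  have hle01 : (2:ℕ) ^ j ≤ 2 ^ (j+1) := pow_le_pow_right₀ (by norm_num) (by omega)
  have hle12 : (2:ℕ) ^ (j+1) ≤ 2 ^ (j+2) := pow_le_pow_right₀ (by norm_num) (by omega)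
  have hle23 : (2:ℕ) ^ (j+2) ≤ 2 ^ (j+3) := pow_le_pow_right₀ (by norm_num) (by omega)
  have hN4 : N < 2 ^ (j + 4) := by
    calc N = 10 * M := hN
    _ < 10 * 2 ^ j := by omega
    _ ≤ 16 * 2 ^ j := Nat.mul_le_mul_right _ (by norm_num)
    _ = 2 ^ (j + 4) := by rw [pow_add]; ring
  have hsplit : ∑ β ∈ Finset.Ico M N, Nat.clog 2 (β + 1) =
      (2 ^ j - M) * j + (2 ^ (j+1) - 2 ^ j) * (j + 1) + (2 ^ (j+2) - 2 ^ (j+1)) * (j + 2)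
        + (2 ^ (j+3) - 2 ^ (j+2)) * (j + 3) + (N - 2 ^ (j + 3)) * (j + 4) := by
    rw [← Finset.sum_Ico_consecutive _ (show M ≤ 2 ^ j by omega)
        (show 2 ^ j ≤ N by omega),
      ← Finset.sum_Ico_consecutive _ hle01 (le_trans (le_trans hle12 hle23) h₁.le),
      ← Finset.sum_Ico_consecutive _ hle12 (le_trans hle23 h₁.le),
      ← Finset.sum_Ico_consecutive _ hle23 h₁.le]
    rw [sum_clog_const M (2^j) (j-1) h₂ (by rw [hjm]),
      sum_clog_const (2^j) (2^(j+1)) j le_rfl le_rfl,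
      sum_clog_const (2^(j+1)) (2^(j+2)) (j+1) le_rfl le_rfl,
      sum_clog_const (2^(j+2)) (2^(j+3)) (j+2) le_rfl le_rfl,
      sum_clog_const (2^(j+3)) N (j+3) le_rfl hN4.le]
    rw [hjm]
    ring
  rw [hsplit]
  have hMpos : 0 < M := by
    have : 0 < 2 ^ (j-1) := Nat.pow_pos (by norm_num)
    omega
  push_cast [Nat.cast_sub h₃.le, Nat.cast_sub hle01, Nat.cast_sub hle12,
    Nat.cast_sub hle23, Nat.cast_sub h₁.le]
  have hpow1 : (2:ℝ) ^ (j+1) = 2 * 2 ^ j := by rw [pow_succ]; ring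
  have hpow2 : (2:ℝ) ^ (j+2) = 4 * 2 ^ j := by rw [pow_add]; ring
  have hpow3 : (2:ℝ) ^ (j+3) = 8 * 2 ^ j := by rw [pow_add]; ring
  have hm : (0:ℝ) < M := by exact_mod_cast hMpos
  have h8P : (8:ℝ) * 2 ^ j < 10 * M := by
    have h := h₁
    rw [hN] at h
    have : (2:ℝ) ^ (j+3) < 10 * M := by exact_mod_cast h
    linarith [hpow3]
  have hNreal : (N:ℝ) = 10 * M := by rw [hN]; push_cast; ring
  rw [hNreal, hpow1, hpow2, hpow3]
  rw [show (10:ℝ) * M - M = 9 * M by ring, lt_div_iff₀ (by positivity)]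
  nlinarith [hm, h8P]
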